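/- Lemma (gsd step, case d = 0): if x ∈ [-1,1], |x| ≤ 1/2, and (a :: b :: tq) is a Gray code of x, then (a :: nh(tq)) is a Gray code of 2x, where nh negates the head digit of a stream. -/
import Mathlib


/-- Gray-code digits: `none` is ⊥, `some false` is L, `some true` is R. -/
abbrev GDigit := Option Bool

def RD (a : GDigit) (x : ℝ) : Prop :=
  (x < 0 ∧ a = some false) ∨ (x > 0 ∧ a = some true) ∨ x = 0

/-- `GrayRel q x`: `x` has infinite Gray code `q`, defined as the greatest
relation satisfying the unfolding
`R(a::q, x) ↔ -1 ≤ x ≤ 1 ∧ R_D(a,x) ∧ R(q, 1 - 2|x|)`. -/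
def GrayRel (q : ℕ → GDigit) (x : ℝ) : Prop :=
  ∃ R : (ℕ → GDigit) → ℝ → Prop,
    (∀ q x, R q x →
      -1 ≤ x ∧ x ≤ 1 ∧ RD (q 0) x ∧ R (fun i => q (i + 1)) (1 - 2 * |x|)) ∧
    R q x

def consD (a : GDigit) (s : ℕ → GDigit) : ℕ → GDigit :=
  fun n => match n with | 0 => a | n + 1 => s n

def notD : GDigit → GDigit
  | none => none
  | some b => some (!b)


lemma GrayRel.destruct {q : ℕ → GDigit} {x : ℝ} (h : GrayRel q x) :
    -1 ≤ x ∧ x ≤ 1 ∧ RD (q 0) x ∧ GrayRel (fun i => q (i + 1)) (1 - 2 * |x|) := by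
  obtain ⟨R, hR, hqx⟩ := h
  obtain ⟨a, b, c, d⟩ := hR q x hqx
  exact ⟨a, b, c, R, hR, d⟩

lemma GrayRel.cons {a : GDigit} {s : ℕ → GDigit} {x : ℝ}
    (h1 : -1 ≤ x) (h2 : x ≤ 1) (hd : RD a x) (hs : GrayRel s (1 - 2 * |x|)) :
    GrayRel (consD a s) x := by
  refine ⟨fun t z => GrayRel t z ∨ (t = consD a s ∧ z = x), ?_, Or.inr ⟨rfl, rfl⟩⟩
  rintro t z (hg | ⟨rfl, rfl⟩)
  · obtain ⟨p1, p2, p3, p4⟩ := hg.destruct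
    exact ⟨p1, p2, p3, Or.inl p4⟩
  · refine ⟨h1, h2, hd, Or.inl ?_⟩
    have : (fun i => consD a s (i + 1)) = s := by funext i; rfl
    rw [this]; exact hs

lemma GrayRel.neg {q : ℕ → GDigit} {x : ℝ} (h : GrayRel q x) :
    GrayRel (consD (notD (q 0)) (fun i => q (i + 1))) (-x) := by
  obtain ⟨p1, p2, p3, p4⟩ := h.destruct
  refine GrayRel.cons (by linarith) (by linarith) ?_ ?_
  · rcases p3 with ⟨hlt, ha⟩ | ⟨hlt, ha⟩ | h0
    · exact Or.inr (Or.inl ⟨by linarith, by rw [ha]; rfl⟩)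
    · exact Or.inl ⟨by linarith, by rw [ha]; rfl⟩
    · exact Or.inr (Or.inr (by rw [h0, neg_zero]))
  · rwa [abs_neg]

theorem gsd_step_zero (x : ℝ) (q : ℕ → GDigit)
    (h1 : -1 ≤ x) (h2 : x ≤ 1) (hx : |x| ≤ 1 / 2)
    (hg : GrayRel q x) :
    GrayRel (consD (q 0) (consD (notD (q 2)) (fun i => q (i + 3)))) (2 * x) := by
  obtain ⟨_, _, hd0, hg1⟩ := hg.destruct
  obtain ⟨_, _, _, hg2⟩ := hg1.destruct
  -- hg2 : GrayRel (fun i => q (i + 2)) (1 - 2 * |1 - 2 * |x||)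
  have hnn : (0:ℝ) ≤ 1 - 2 * |x| := by linarith
  have habs : abs (1 - 2 * |x|) = 1 - 2 * |x| := abs_of_nonneg hnn
  have hval : 1 - 2 * abs (1 - 2 * |x|) = 4 * |x| - 1 := by rw [habs]; ring
  rw [hval] at hg2
  have hneg := hg2.neg
  have hv2 : -(4 * |x| - 1) = 1 - 2 * |2 * x| := by
    rw [abs_mul, abs_two]; ring
  rw [hv2] at hneg
  refine GrayRel.cons (by cases abs_le.mp hx; linarith) (by cases abs_le.mp hx; linarith) ?_ hneg
  rcases hd0 with ⟨hlt, ha⟩ | ⟨hlt, ha⟩ | h0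
  · exact Or.inl ⟨by linarith, ha⟩
  · exact Or.inr (Or.inl ⟨by linarith, ha⟩)
  · exact Or.inr (Or.inr (by rw [h0, mul_zero]))
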